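/- A sectionally contracting subspace and a sectionally expanding subspace of the tangent space at a fixed point of a linear flow intersect in a subspace of dimension at most 1. In particular, if E is sectionally contracting of dimension s+1 and F is sectionally expanding of dimension d−s+1 in a d-dimensional space, a contradiction arises since dim(E ∩ F) ≥ 2. -/

import Mathlib

open scoped RealInnerProductSpace

/-- The (unsigned) area of the parallelogram spanned by `u` and `v`. -/
noncomputable def area {V : Type*} [NormedAddCommGroup V] [InnerProductSpace ℝ V]
    (u v : V) : ℝ :=
  Real.sqrt (‖u‖ ^ 2 * ‖v‖ ^ 2 - ⟪u, v⟫ ^ 2)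

/-- `S` is an invariant sectionally contracting subspace of the linear flow `Φ`:
on every 2-dimensional subspace of `S` the determinant (area) satisfies
`|det(Φ_t|_L)| ≤ C e^{-η t}` for `t ≥ 0`. -/
def SectionallyContracting {V : Type*} [NormedAddCommGroup V] [InnerProductSpace ℝ V]
    (Φ : ℝ → V →L[ℝ] V) (C η : ℝ) (S : Submodule ℝ V) : Prop :=
  (∀ t : ℝ, S.map (Φ t).toLinearMap ≤ S) ∧
  ∀ t : ℝ, 0 ≤ t → ∀ u ∈ S, ∀ v ∈ S,
    area (Φ t u) (Φ t v) ≤ C * Real.exp (-η * t) * area u v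

/-- `S` is an invariant sectionally expanding subspace of the linear flow `Φ`:
on every 2-dimensional subspace of `S`, `|det(Φ_t|_L)| ≥ C⁻¹ e^{η t}` for `t ≥ 0`. -/
def SectionallyExpanding {V : Type*} [NormedAddCommGroup V] [InnerProductSpace ℝ V]
    (Φ : ℝ → V →L[ℝ] V) (C η : ℝ) (S : Submodule ℝ V) : Prop :=
  (∀ t : ℝ, S.map (Φ t).toLinearMap ≤ S) ∧
  ∀ t : ℝ, 0 ≤ t → ∀ u ∈ S, ∀ v ∈ S,
    C⁻¹ * Real.exp (η * t) * area u v ≤ area (Φ t u) (Φ t v)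

/-- A sectionally contracting and a sectionally expanding invariant subspace of a linear
flow intersect in dimension at most 1; in particular `dim E = s+1` and
`dim F = d−s+1` in a `d`-dimensional space yields a contradiction. -/
lemma area_pos {V : Type*} [NormedAddCommGroup V] [InnerProductSpace ℝ V]
    {u v : V} (h : LinearIndependent ℝ ![u, v]) : 0 < area u v := by
  have hu : u ≠ 0 := by
    have := h.ne_zero 0; simpa using this
  have hv : v ≠ 0 := by
    have := h.ne_zero 1; simpa using this
  have h1 : ⟪u, v⟫ < ‖u‖ * ‖v‖ := by
    rw [inner_lt_norm_mul_iff_real]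
    intro hc
    have := h.eq_zero_of_pair (s := ‖v‖) (t := -‖u‖) ?_
    · exact hv (norm_eq_zero.mp this.1)
    · simpa [sub_eq_add_neg] using sub_eq_zero.mpr hc
  have h2 : -(‖u‖ * ‖v‖) < ⟪u, v⟫ := by
    have : ⟪u, -v⟫ < ‖u‖ * ‖-v‖ := by
      rw [inner_lt_norm_mul_iff_real]
      intro hc
      have := h.eq_zero_of_pair (s := ‖-v‖) (t := ‖u‖) ?_
      · exact hu (norm_eq_zero.mp this.2)
      · simpa using sub_eq_zero.mpr hc
    rw [inner_neg_right, norm_neg] at this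
    linarith
  have habs : ⟪u, v⟫ ^ 2 < (‖u‖ * ‖v‖) ^ 2 := by
    have := sq_lt_sq' h2 h1
    simpa [sq_abs] using this
  have : 0 < ‖u‖ ^ 2 * ‖v‖ ^ 2 - ⟪u, v⟫ ^ 2 := by nlinarith
  exact Real.sqrt_pos.mpr this

theorem secContracting_inter_secExpanding {V : Type*} [NormedAddCommGroup V]
    [InnerProductSpace ℝ V] [FiniteDimensional ℝ V]
    (Φ : ℝ → V →L[ℝ] V)
    (hΦ0 : Φ 0 = ContinuousLinearMap.id ℝ V)
    (hΦadd : ∀ t s : ℝ, Φ (t + s) = (Φ t).comp (Φ s))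
    (C η : ℝ) (hC : 1 ≤ C) (hη : 0 < η)
    (E F : Submodule ℝ V)
    (hE : SectionallyContracting Φ C η E) (hF : SectionallyExpanding Φ C η F)
    (d s : ℕ) (hd : Module.finrank ℝ V = d) :
    Module.finrank ℝ ↥(E ⊓ F) ≤ 1 ∧
      (Module.finrank ℝ ↥E = s + 1 → Module.finrank ℝ ↥F = d - s + 1 → s ≤ d →
        False) := by
  have hC0 : (0:ℝ) < C := lt_of_lt_of_le one_pos hC
  have key : Module.finrank ℝ ↥(E ⊓ F) ≤ 1 := by
    by_contra hle
    push_neg at hle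
    -- get two linearly independent vectors in E ⊓ F
    set G := E ⊓ F with hG
    have h2 : 2 ≤ Module.finrank ℝ ↥G := hle
    let b := Module.finBasis ℝ ↥G
    have li : LinearIndependent ℝ (fun i => ((b i : ↥G) : V)) :=
      b.linearIndependent.map' G.subtype (Submodule.ker_subtype G)
    let i0 : Fin (Module.finrank ℝ ↥G) := ⟨0, by omega⟩
    let i1 : Fin (Module.finrank ℝ ↥G) := ⟨1, by omega⟩
    set u : V := ((b i0 : ↥G) : V) with hu
    set v : V := ((b i1 : ↥G) : V) with hv
    have huE : u ∈ E := ((b i0).2 : (b i0 : ↥G).1 ∈ E ⊓ F).1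
    have huF : u ∈ F := ((b i0).2).2
    have hvE : v ∈ E := ((b i1).2).1
    have hvF : v ∈ F := ((b i1).2).2
    have hpair : LinearIndependent ℝ ![u, v] := by
      have hinj : Function.Injective (fun j : Fin 2 => if j = 0 then i0 else i1) := by
        intro a c hac
        fin_cases a <;> fin_cases c <;> simp_all [i0, i1] <;> omega
      have := li.comp _ hinj
      convert this using 1
      funext j
      fin_cases j <;> simp [u, v]
    have hA : 0 < area u v := area_pos hpair
    -- choose a time witnessing the contradiction
    set t : ℝ := (2 * Real.log C + 1) / (2 * η) with htdef
    have hlogC : 0 ≤ Real.log C := Real.log_nonneg hC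
    have ht : 0 ≤ t := by positivity
    have h1 := hF.2 t ht u huF v hvF
    have h2' := hE.2 t ht u huE v hvE
    have hcomb : C⁻¹ * Real.exp (η * t) * area u v ≤ C * Real.exp (-η * t) * area u v :=
      h1.trans h2'
    have hineq : C⁻¹ * Real.exp (η * t) ≤ C * Real.exp (-η * t) :=
      le_of_mul_le_mul_right hcomb hA
    have hηt : η * t = Real.log C + 1/2 := by
      rw [htdef]; field_simp
    have hexp : Real.exp (η * t) = C * Real.exp (1/2) := by
      rw [hηt, Real.exp_add, Real.exp_log hC0]
    have hexpneg : Real.exp (-η * t) = (C * Real.exp (1/2))⁻¹ := by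
      rw [neg_mul, Real.exp_neg, hexp]
    rw [hexp, hexpneg] at hineq
    have he : (1:ℝ) < Real.exp (1/2) := by
      have := Real.add_one_lt_exp (x := (1:ℝ)/2) (by norm_num)
      linarith
    have hepos : (0:ℝ) < Real.exp (1/2) := Real.exp_pos _
    have hCe : (0:ℝ) < C * Real.exp (1/2) := by positivity
    rw [inv_mul_eq_div, div_le_iff₀ hC0] at hineq
    have h3 : (C * Real.exp (1/2)) * (C * Real.exp (1/2)) ≤
        C * (C * Real.exp (1/2))⁻¹ * C * (C * Real.exp (1/2)) :=
      mul_le_mul_of_nonneg_right hineq hCe.le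
    have h4 : C * (C * Real.exp (1/2))⁻¹ * C * (C * Real.exp (1/2)) = C * C := by
      field_simp
    rw [h4] at h3
    have hee : 1 < Real.exp (1/2) * Real.exp (1/2) := by nlinarith
    have h5 : C * C * 1 < C * C * (Real.exp (1/2) * Real.exp (1/2)) :=
      mul_lt_mul_of_pos_left hee (mul_pos hC0 hC0)
    nlinarith
  refine ⟨key, fun hEr hFr hs => ?_⟩
  have hsum := Submodule.finrank_sup_add_finrank_inf_eq E F
  have hle : Module.finrank ℝ ↥(E ⊔ F) ≤ d := hd ▸ Submodule.finrank_le _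
  omega
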